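/- Let g be an oriented two-graph on a finite vertex set V and let C be its associated switching class of tournaments on V. Then g is special if and only if for every tournament T ∈ C there is at most one vertex v ∈ V such that the tournament obtained from the augmentation T⁺ by deleting v is isomorphic to a member of C. -/

import Mathlib

def IsTournament {V : Type*} (e : V → V → ℤ) : Prop :=
  (∀ x y : V, e y x = - e x y) ∧ ∀ x y : V, x ≠ y → e x y = 1 ∨ e x y = -1

def gT {V : Type*} (e : V → V → ℤ) : V → V → V → ℤ :=
  fun x y z => e x y * e y z * e z x

def IsOrientedTwoGraph {V : Type*} (g : V → V → V → ℤ) : Prop :=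
  (∀ x y z : V, g y x z = - g x y z) ∧
  (∀ x y z : V, g x z y = - g x y z) ∧
  (∀ x y z : V, x ≠ y → y ≠ z → x ≠ z → g x y z = 1 ∨ g x y z = -1) ∧
  (∀ x y z w : V, x ≠ y → x ≠ z → x ≠ w → y ≠ z → y ≠ w → z ≠ w →
    g x y z * g y x w * g z y w * g x z w = 1)

def TwoGraphIso {V₁ V₂ : Type*} (g₁ : V₁ → V₁ → V₁ → ℤ) (g₂ : V₂ → V₂ → V₂ → ℤ) : Prop :=
  ∃ φ : V₁ ≃ V₂, ∀ x y z, g₂ (φ x) (φ y) (φ z) = g₁ x y z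

def restrict3 {W : Type*} (h : W → W → W → ℤ) (A : Finset W) :
    {a // a ∈ A} → {a // a ∈ A} → {a // a ∈ A} → ℤ :=
  fun x y z => h x.1 y.1 z.1

def IsSpecial {V : Type} [Fintype V] (g : V → V → V → ℤ) : Prop :=
  ∀ (W : Type) [Fintype W], ∀ h : W → W → W → ℤ,
    IsOrientedTwoGraph h → Fintype.card W = Fintype.card V + 1 →
    {A : Finset W | A.card = Fintype.card V ∧ TwoGraphIso g (restrict3 h A)}.ncard ≤ 2

/-- Isomorphism of tournaments. -/
def TournIso {V₁ V₂ : Type*} (e₁ : V₁ → V₁ → ℤ) (e₂ : V₂ → V₂ → ℤ) : Prop :=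
  ∃ φ : V₁ ≃ V₂, ∀ x y, e₂ (φ x) (φ y) = e₁ x y

/-- The augmentation `T⁺` of the tournament `T`: a new vertex `∞` (here `none`) is added,
with all edges between `V` and `∞` directed towards `∞`. -/
def aug {V : Type*} (e : V → V → ℤ) : Option V → Option V → ℤ
  | some a, some b => e a b
  | some _, none => 1
  | none, some _ => -1
  | none, none => 0

lemma tourn_self {V : Type*} {e : V → V → ℤ} (he : IsTournament e) (x : V) : e x x = 0 := by
  have := he.1 x x; linarith

lemma otg_deg1 {V : Type*} {g : V → V → V → ℤ} (hg : IsOrientedTwoGraph g) (x z : V) :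
    g x x z = 0 := by
  have := hg.1 x x z; linarith

lemma otg_deg2 {V : Type*} {g : V → V → V → ℤ} (hg : IsOrientedTwoGraph g) (x y : V) :
    g x y y = 0 := by
  have := hg.2.1 x y y; linarith

lemma otg_deg3 {V : Type*} {g : V → V → V → ℤ} (hg : IsOrientedTwoGraph g) (x y : V) :
    g x y x = 0 := by
  have h1 := hg.1 y x x
  have h2 := hg.2.1 y x x
  linarith

lemma tourn_gT_otg {V : Type*} {e : V → V → ℤ} (he : IsTournament e) :
    IsOrientedTwoGraph (gT e) := by
  obtain ⟨ha, hv⟩ := he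
  refine ⟨?_, ?_, ?_, ?_⟩
  · intro x y z; simp only [gT]; rw [ha y x, ha x z, ha z y]; ring
  · intro x y z; simp only [gT]; rw [ha x z, ha z y, ha y x]; ring
  · intro x y z hxy hyz hxz
    simp only [gT]
    rcases hv x y hxy with h1 | h1 <;> rcases hv y z hyz with h2 | h2 <;>
      rcases hv z x (Ne.symm hxz) with h3 | h3 <;> simp [h1, h2, h3]
  · intro x y z w hxy hxz hxw hyz hyw hzw
    simp only [gT]
    rw [ha x y, ha y w, ha y z, ha z w, ha z x, ha x w]
    rcases hv x y hxy with h1 | h1 <;> rcases hv y z hyz with h2 | h2 <;>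
      rcases hv z x (Ne.symm hxz) with h3 | h3 <;> rcases hv x w hxw with h4 | h4 <;>
      rcases hv y w hyw with h5 | h5 <;> rcases hv z w hzw with h6 | h6 <;>
      rw [h1, h2, h3, h4, h5, h6] <;> norm_num

lemma aug_tourn {V : Type*} {e : V → V → ℤ} (he : IsTournament e) : IsTournament (aug e) := by
  constructor
  · intro u v
    match u, v with
    | some a, some b => exact he.1 a b
    | some a, none => simp [aug]
    | none, some b => simp [aug]
    | none, none => simp [aug]
  · intro u v huv
    match u, v with
    | some a, some b => exact he.2 a b (by simpa using huv)
    | some a, none => left; rfl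
    | none, some b => right; rfl
    | none, none => exact absurd rfl huv

/-- The canonical tournament with two-graph `h` in which `w₀` is dominant. -/
def baseTourn {W : Type*} [DecidableEq W] (h : W → W → W → ℤ) (w₀ : W) : W → W → ℤ :=
  fun x y => if x = w₀ then (if y = w₀ then 0 else -1) else if y = w₀ then 1 else - h x y w₀

lemma baseTourn_ne {W : Type*} [DecidableEq W] (h : W → W → W → ℤ) {w₀ x y : W}
    (hx : x ≠ w₀) (hy : y ≠ w₀) : baseTourn h w₀ x y = - h x y w₀ := by
  simp [baseTourn, hx, hy]

lemma baseTourn_dom {W : Type*} [DecidableEq W] (h : W → W → W → ℤ) {w₀ x : W}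
    (hx : x ≠ w₀) : baseTourn h w₀ x w₀ = 1 := by simp [baseTourn, hx]

lemma baseTourn_dom' {W : Type*} [DecidableEq W] (h : W → W → W → ℤ) {w₀ x : W}
    (hx : x ≠ w₀) : baseTourn h w₀ w₀ x = -1 := by simp [baseTourn, hx]

lemma baseTourn_tourn {W : Type*} [DecidableEq W] {h : W → W → W → ℤ}
    (hh : IsOrientedTwoGraph h) (w₀ : W) : IsTournament (baseTourn h w₀) := by
  constructor
  · intro x y
    by_cases hx : x = w₀ <;> by_cases hy : y = w₀
    · simp [baseTourn, hx, hy]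
    · simp [baseTourn, hx, hy]
    · simp [baseTourn, hx, hy]
    · rw [baseTourn_ne h hy hx, baseTourn_ne h hx hy, hh.1 x y w₀]
  · intro x y hxy
    by_cases hx : x = w₀ <;> by_cases hy : y = w₀
    · exact absurd (hx.trans hy.symm) hxy
    · right; simp [baseTourn, hx, hy]
    · left; simp [baseTourn, hx, hy]
    · rw [baseTourn_ne h hx hy]
      rcases hh.2.2.1 x y w₀ hxy hy hx with h1 | h1 <;> simp [h1]

lemma baseTourn_gT {W : Type*} [DecidableEq W] {h : W → W → W → ℤ}
    (hh : IsOrientedTwoGraph h) (w₀ : W) : gT (baseTourn h w₀) = h := by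
  have ht := baseTourn_tourn hh w₀
  have hotg := tourn_gT_otg ht
  funext x y z
  by_cases hxy : x = y
  · subst hxy; rw [otg_deg1 hotg, otg_deg1 hh]
  by_cases hyz : y = z
  · subst hyz; rw [otg_deg2 hotg, otg_deg2 hh]
  by_cases hxz : x = z
  · subst hxz; rw [otg_deg3 hotg, otg_deg3 hh]
  by_cases hx : x = w₀
  · subst hx
    have hy : y ≠ x := fun hc => hxy hc.symm
    have hz : z ≠ x := fun hc => hxz hc.symm
    have key : gT (baseTourn h x) x y z = h y z x := by
      simp only [gT]
      rw [baseTourn_dom' h hy, baseTourn_dom h hz, baseTourn_ne h hy hz]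
      ring
    rw [key, hh.1 y x z, hh.2.1 y z x]; ring
  · by_cases hy : y = w₀
    · subst hy
      have hx' : x ≠ y := hx
      have hz : z ≠ y := fun hc => hyz hc.symm
      have key : gT (baseTourn h y) x y z = h z x y := by
        simp only [gT]
        rw [baseTourn_dom h hx', baseTourn_dom' h hz, baseTourn_ne h hz hx']
        ring
      rw [key, hh.2.1 x z y, hh.1 z x y]; ring
    · by_cases hz : z = w₀
      · subst hz
        have hx' : x ≠ z := hx
        have hy' : y ≠ z := hy
        have key : gT (baseTourn h z) x y z = h x y z := by
          simp only [gT]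
          rw [baseTourn_dom h hy', baseTourn_dom' h hx', baseTourn_ne h hx' hy']
          ring
        rw [key]
      · have hgoal : gT (baseTourn h w₀) x y z
            = -h x y w₀ * -h y z w₀ * -h z x w₀ := by
          simp only [gT]
          rw [baseTourn_ne h hx hy, baseTourn_ne h hy hz, baseTourn_ne h hz hx]
        rw [hgoal]
        have hc := hh.2.2.2 x y z w₀ hxy hxz hx hyz hy hz
        rw [hh.1 x y w₀, hh.1 y z w₀, hh.1 z x w₀] at hc
        rcases hh.2.2.1 x y z hxy hyz hxz with hv | hv <;> rw [hv] at hc ⊢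
        · linear_combination hc
        · linear_combination -hc

lemma pull_tourn {V W : Type*} {t : W → W → ℤ} (ht : IsTournament t) (f : V → W)
    (hf : Function.Injective f) :
    IsTournament (fun x y => t (f x) (f y)) := by
  exact ⟨fun x y => ht.1 _ _, fun x y hxy => ht.2 _ _ (fun hc => hxy (hf hc))⟩

lemma erase_inj {W : Type*} [DecidableEq W] [Fintype W] {a b : W}
    (hab : Finset.univ.erase a = Finset.univ.erase b) : a = b := by
  by_contra hne
  have h1 : a ∈ Finset.univ.erase b := Finset.mem_erase.mpr ⟨hne, Finset.mem_univ a⟩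
  rw [← hab] at h1
  exact (Finset.mem_erase.mp h1).1 rfl

lemma exists_erase {W : Type*} [Fintype W] [DecidableEq W] {A : Finset W} {n : ℕ}
    (hW : Fintype.card W = n + 1) (hA : A.card = n) : ∃ w, A = Finset.univ.erase w := by
  have hcompl : Aᶜ.card = 1 := by rw [Finset.card_compl, hA, hW]; omega
  obtain ⟨w, hw⟩ := Finset.card_eq_one.mp hcompl
  refine ⟨w, ?_⟩
  ext a
  rw [Finset.mem_erase]
  have h1 : a ∈ Aᶜ ↔ a = w := by rw [hw, Finset.mem_singleton]
  rw [Finset.mem_compl] at h1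
  simp only [Finset.mem_univ, and_true]
  tauto

/-- an oriented two-graph `g` on a finite vertex set `V`, with associated
switching class `C = {tournaments e on V with g_e = g}`, is special iff for every
tournament `e ∈ C` there is at most one vertex `v ∈ V` such that the tournament obtained
from the augmentation `e⁺` by deleting `v` is isomorphic to a member of `C`. -/
theorem statement15 {V : Type} [Fintype V] (g : V → V → V → ℤ)
    (hg : IsOrientedTwoGraph g) :
    IsSpecial g ↔
      ∀ e : V → V → ℤ, IsTournament e → gT e = g →
        {v : V | ∃ e' : V → V → ℤ, IsTournament e' ∧ gT e' = g ∧
          TournIso e'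
            (fun (x y : {u : Option V // u ≠ some v}) => aug e x.1 y.1)}.Subsingleton := by
  classical
  constructor
  · -- special → at most one deletable vertex
    intro hspec e he hge
    intro v₁ hv₁ v₂ hv₂
    by_contra hne
    have hcardW : Fintype.card (Option V) = Fintype.card V + 1 := Fintype.card_option
    have haug := aug_tourn he
    have hotg := tourn_gT_otg haug
    have hspec' := hspec (Option V) (gT (aug e)) hotg hcardW
    set S : Set (Finset (Option V)) := {A : Finset (Option V) |
      A.card = Fintype.card V ∧ TwoGraphIso g (restrict3 (gT (aug e)) A)} with hS
    have hcardA : ∀ u : Option V, (Finset.univ.erase u).card = Fintype.card V := by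
      intro u
      rw [Finset.card_erase_of_mem (Finset.mem_univ _), Finset.card_univ, hcardW]
      omega
    have memS : ∀ v : V, v ∈ {v : V | ∃ e' : V → V → ℤ, IsTournament e' ∧ gT e' = g ∧
          TournIso e' (fun (x y : {u : Option V // u ≠ some v}) => aug e x.1 y.1)} →
        (Finset.univ.erase (some v)) ∈ S := by
      rintro v ⟨e', he', hge', ψ, hψ⟩
      have hψ' : ∀ a b : V, aug e (ψ a).1 (ψ b).1 = e' a b := hψ
      refine ⟨hcardA _, ψ.trans (Equiv.subtypeEquivRight ?_), ?_⟩
      · intro u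
        simp [Finset.mem_erase]
      · intro x y z
        show gT (aug e) (ψ x).1 (ψ y).1 (ψ z).1 = g x y z
        simp only [gT]
        rw [hψ' x y, hψ' y z, hψ' z x, ← hge']
        rfl
    have memS0 : (Finset.univ.erase (none : Option V)) ∈ S := by
      refine ⟨hcardA _, ?_⟩
      refine ⟨⟨fun x => ⟨some x, by simp⟩,
        fun a => a.1.get (Option.isSome_iff_ne_none.mpr (Finset.mem_erase.mp a.2).1),
        fun x => by simp, fun a => Subtype.ext (by simp)⟩, ?_⟩
      intro x y z
      show gT (aug e) (some x) (some y) (some z) = g x y z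
      rw [← hge]
      rfl
    have m1 := memS v₁ hv₁
    have m2 := memS v₂ hv₂
    have d01 : (Finset.univ.erase (none : Option V)) ≠ Finset.univ.erase (some v₁) := by
      intro hc; exact Option.some_ne_none _ (erase_inj hc).symm
    have d02 : (Finset.univ.erase (none : Option V)) ≠ Finset.univ.erase (some v₂) := by
      intro hc; exact Option.some_ne_none _ (erase_inj hc).symm
    have d12 : (Finset.univ.erase (some v₁)) ≠ Finset.univ.erase (some v₂) := by
      intro hc; exact hne (Option.some_injective _ (erase_inj hc))
    have hsub : ({Finset.univ.erase (none : Option V), Finset.univ.erase (some v₁),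
        Finset.univ.erase (some v₂)} : Set (Finset (Option V))) ⊆ S := by
      intro A hA
      rcases hA with hA | hA | hA <;> subst hA
      · exact memS0
      · exact m1
      · exact m2
    have h3 : ({Finset.univ.erase (none : Option V), Finset.univ.erase (some v₁),
        Finset.univ.erase (some v₂)} : Set (Finset (Option V))).ncard = 3 := by
      rw [Set.ncard_insert_of_notMem (by simp [d01, d02]),
        Set.ncard_insert_of_notMem (by simp [d12]), Set.ncard_singleton]
    have hle : 3 ≤ S.ncard := h3 ▸ Set.ncard_le_ncard hsub (Set.toFinite S)
    omega
  · -- at most one deletable vertex → special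
    intro hcond W _ h hotg hcard
    by_contra hgt
    push_neg at hgt
    set S : Set (Finset W) := {A : Finset W |
      A.card = Fintype.card V ∧ TwoGraphIso g (restrict3 h A)} with hS
    have hfin : S.Finite := Set.toFinite S
    obtain ⟨T3, hT3sub, hT3card⟩ := Finset.exists_subset_card_eq (s := hfin.toFinset) (n := 3)
      (by rw [Set.ncard_eq_toFinset_card _ hfin] at hgt; omega)
    obtain ⟨A₁, A₂, A₃, h12, h13, h23, hT3⟩ := Finset.card_eq_three.mp hT3card
    have hmem : ∀ A ∈ T3, A ∈ S := fun A hA => (Set.Finite.mem_toFinset hfin).mp (hT3sub hA)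
    have hA₁ := hmem A₁ (by rw [hT3]; simp)
    have hA₂ := hmem A₂ (by rw [hT3]; simp)
    have hA₃ := hmem A₃ (by rw [hT3]; simp)
    obtain ⟨w₁, hw₁⟩ := exists_erase hcard hA₁.1
    obtain ⟨w₂, hw₂⟩ := exists_erase hcard hA₂.1
    obtain ⟨w₃, hw₃⟩ := exists_erase hcard hA₃.1
    have hw12 : w₁ ≠ w₂ := fun hc => h12 (by rw [hw₁, hw₂, hc])
    have hw13 : w₁ ≠ w₃ := fun hc => h13 (by rw [hw₁, hw₃, hc])
    have hw23 : w₂ ≠ w₃ := fun hc => h23 (by rw [hw₂, hw₃, hc])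
    set t : W → W → ℤ := baseTourn h w₁ with htdef
    have ht : IsTournament t := baseTourn_tourn hotg w₁
    have htg : gT t = h := baseTourn_gT hotg w₁
    obtain ⟨φ, hφ⟩ := hA₁.2
    have hφne : ∀ x : V, (φ x).1 ≠ w₁ := by
      intro x
      have h2 : ((φ x).1 : W) ∈ Finset.univ.erase w₁ := by rw [← hw₁]; exact (φ x).2
      exact (Finset.mem_erase.mp h2).1
    set e : V → V → ℤ := fun x y => t (φ x).1 (φ y).1 with hedef
    have he : IsTournament e :=
      pull_tourn ht (fun x => (φ x).1) (fun a b hab => φ.injective (Subtype.ext hab))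
    have hge : gT e = g := by
      funext x y z
      show gT t (φ x).1 (φ y).1 (φ z).1 = g x y z
      rw [htg]
      exact hφ x y z
    -- the equivalence Option V ≃ W
    set f : Option V → W := fun u => u.elim w₁ (fun x => (φ x).1) with hfdef
    have hfinj : Function.Injective f := by
      rintro (_ | a) (_ | b) hab
      · rfl
      · exact absurd hab.symm (hφne b)
      · exact absurd hab (hφne a)
      · exact congrArg some (φ.injective (Subtype.ext hab))
    have hfbij : Function.Bijective f := by
      rw [Fintype.bijective_iff_injective_and_card]
      exact ⟨hfinj, by rw [Fintype.card_option, hcard]⟩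
    set ψ : Option V ≃ W := Equiv.ofBijective f hfbij with hψdef
    have hψ : ∀ u : Option V, ψ u = f u := fun u => rfl
    have hiso : ∀ u u' : Option V, t (ψ u) (ψ u') = aug e u u' := by
      rintro (_ | a) (_ | b)
      · exact tourn_self ht w₁
      · show t w₁ (φ b).1 = -1
        exact baseTourn_dom' h (hφne b)
      · show t (φ a).1 w₁ = 1
        exact baseTourn_dom h (hφne a)
      · rfl
    have key : ∀ a b : W, aug e (ψ.symm a) (ψ.symm b) = t a b := by
      intro a b
      have h1 := hiso (ψ.symm a) (ψ.symm b)
      rw [Equiv.apply_symm_apply, Equiv.apply_symm_apply] at h1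
      exact h1.symm
    -- produce two distinct deletable vertices
    have main : ∀ (w : W) (A : Finset W) (hwm : w ∈ A₁), A = Finset.univ.erase w → A ∈ S →
        φ.symm ⟨w, hwm⟩ ∈
          {v : V | ∃ e' : V → V → ℤ, IsTournament e' ∧ gT e' = g ∧
            TournIso e' (fun (x y : {u : Option V // u ≠ some v}) => aug e x.1 y.1)} := by
      intro w A hwm hAw hAS
      set v : V := φ.symm ⟨w, hwm⟩ with hvdef
      have hφv : (φ v).1 = w := by rw [hvdef, Equiv.apply_symm_apply]
      have hψv : ψ (some v) = w := hφv
      obtain ⟨χ, hχ⟩ := hAS.2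
      refine ⟨fun x y => t (χ x).1 (χ y).1,
        pull_tourn ht (fun x => (χ x).1) (fun a b hab => χ.injective (Subtype.ext hab)), ?_, ?_⟩
      · funext x y z
        show gT t (χ x).1 (χ y).1 (χ z).1 = g x y z
        rw [htg]
        exact hχ x y z
      · -- the isomorphism with the deleted augmentation
        have hmemne : ∀ a : {a // a ∈ A}, a.1 ≠ w := by
          intro a
          have h2 : (a.1 : W) ∈ Finset.univ.erase w := by rw [← hAw]; exact a.2
          exact (Finset.mem_erase.mp h2).1
        refine ⟨χ.trans ⟨fun a => ⟨ψ.symm a.1, ?_⟩, fun u => ⟨ψ u.1, ?_⟩, ?_, ?_⟩, ?_⟩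
        · intro hc
          apply hmemne a
          rw [← hψv, ← hc, Equiv.apply_symm_apply]
        · rw [hAw, Finset.mem_erase]
          refine ⟨fun hc => u.2 ?_, Finset.mem_univ _⟩
          rw [← hψv] at hc
          exact ψ.injective hc
        · intro a
          apply Subtype.ext
          simp
        · intro u
          apply Subtype.ext
          simp
        · intro x y
          show aug e (ψ.symm (χ x).1) (ψ.symm (χ y).1) = t (χ x).1 (χ y).1
          exact key _ _
    have hw₂m : w₂ ∈ A₁ := by
      rw [hw₁]; exact Finset.mem_erase.mpr ⟨hw12.symm, Finset.mem_univ w₂⟩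
    have hw₃m : w₃ ∈ A₁ := by
      rw [hw₁]; exact Finset.mem_erase.mpr ⟨hw13.symm, Finset.mem_univ w₃⟩
    have mv2 := main w₂ A₂ hw₂m hw₂ hA₂
    have mv3 := main w₃ A₃ hw₃m hw₃ hA₃
    have heq := hcond e he hge mv2 mv3
    apply hw23
    have h2 : (φ (φ.symm ⟨w₂, hw₂m⟩)).1 = w₂ := by rw [Equiv.apply_symm_apply]
    have h3 : (φ (φ.symm ⟨w₃, hw₃m⟩)).1 = w₃ := by rw [Equiv.apply_symm_apply]
    rw [← h2, ← h3, heq]
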